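/- Let X be a string whose SA-interval is the nonempty integer interval {i,...,j}, and let c be a character with c ≠ $ such that BWT[i'] ≠ c for all i' ∈ {i,...,j}, but BWT[q] = c for some q ∈ {1,...,n}. Let q_p be the largest position q < i with BWT[q] = c if one exists, and let q_f be the smallest position q > j with BWT[q] = c if one exists; at least one of q_p, q_f exists. Then there is q ∈ {q_p, q_f} (among those that exist) such that for every position p ∈ {1,...,n}, lcp(cX, T[p..n]) ≤ lcp(cX, T[SA[q]−1..n]), where cX denotes the concatenation of the character c with the string X. That is, among all suffixes of T, one maximizing the length of the longest common prefix with cX starts with the occurrence of c in the BWT immediately preceding position i or immediately following position j. -/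
import Mathlib


variable {α : Type*} [LinearOrder α]

/-- The suffix `T[p..n]` of a 1-indexed string `T[1..n]`, as a list. -/
def sfx (T : ℕ → α) (n p : ℕ) : List α :=
  (List.range (n + 1 - p)).map (fun d => T (p + d))

/-- The Burrows–Wheeler transform determined by the text `T`, its suffix array `SA`,
and the end-of-string character `dollar`:  `BWT[i] = T[SA[i]-1]` if `SA[i] > 1`,
and `BWT[i] = $` if `SA[i] = 1`. -/
def bwt (T : ℕ → α) (SA : ℕ → ℕ) (dollar : α) (i : ℕ) : α :=
  if SA i = 1 then dollar else T (SA i - 1)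

/-- Length of the longest common prefix of two lists. -/
def lcp [DecidableEq β] : List β → List β → ℕ
  | a :: u, b :: v => if a = b then lcp u v + 1 else 0
  | _, _ => 0

theorem lcp_comm {β : Type*} [DecidableEq β] : ∀ u v : List β, lcp u v = lcp v u
  | [], [] => rfl
  | [], _ :: _ => rfl
  | _ :: _, [] => rfl
  | a :: u, b :: v => by
    by_cases h : a = b
    · subst h; simp [lcp, lcp_comm u v]
    · simp [lcp, h, Ne.symm h]

theorem lcp_prefix {β : Type*} [DecidableEq β] :
    ∀ (X w v : List β), X <+: w → lcp X v = min (lcp w v) X.length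
  | [], w, v, _ => by simp [lcp]
  | a :: X, w, v, h => by
    obtain ⟨t, rfl⟩ := h
    cases v with
    | nil => simp [lcp]
    | cons b v =>
      by_cases hab : a = b
      · subst hab
        simp only [List.cons_append, lcp, eq_self_iff_true, if_true, List.length_cons, List.append_eq]
        rw [lcp_prefix X (X ++ t) v ⟨t, rfl⟩]
        omega
      · simp [List.cons_append, lcp, hab]

theorem lcp_squeeze {β : Type*} [LinearOrder β] :
    ∀ (u v w : List β), List.Lex (· < ·) u v → List.Lex (· < ·) v w →
      lcp u w ≤ lcp u v ∧ lcp u w ≤ lcp v w := by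
  intro u
  induction u with
  | nil => intro v w _ _; simp [lcp]
  | cons a u ih =>
    intro v w h1 h2
    cases v with
    | nil => cases h1
    | cons e v =>
      cases w with
      | nil => cases h2
      | cons b w =>
        cases h1 with
        | rel hlt =>
          cases h2 with
          | rel hlt2 => simp [lcp, ne_of_lt (hlt.trans hlt2)]
          | cons h2' => simp [lcp, ne_of_lt hlt]
        | cons h1' =>
          cases h2 with
          | rel hlt2 => simp [lcp, ne_of_lt hlt2]
          | cons h2' =>
            have := ih v w h1' h2'
            simp only [lcp, eq_self_iff_true, if_true]
            omega

theorem sfx_cons (T : ℕ → α) (n p : ℕ) (hp : p ≤ n) :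
    sfx T n p = T p :: sfx T n (p + 1) := by
  unfold sfx
  rw [show n + 1 - p = (n + 1 - (p + 1)) + 1 from by omega,
    List.range_succ_eq_map, List.map_cons, List.map_map]
  refine congrArg₂ List.cons (by simp) (List.map_congr_left fun d _ => ?_)
  simp only [Function.comp]
  congr 1
  omega

/-- Let `{i,...,j}` be the nonempty SA-interval of `X`, and let
`c ≠ $` occur in the BWT but not in `BWT[i..j]`.  Then some occurrence `q` of `c` in
the BWT that is either the last one before position `i` or the first one after
position `j` is such that the suffix `T[SA[q]-1..n]` maximizes, over all suffixes of
`T`, the length of the longest common prefix with `cX`. -/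
theorem statement8
    (n : ℕ) (T : ℕ → α) (dollar : α) (SA : ℕ → ℕ)
    -- `T[1..n]` is a string of length `n ≥ 1` ending with `$`,
    -- which is smaller than every other character and occurs only at position `n`
    (hn : 1 ≤ n) (hTn : T n = dollar)
    (hdollar : ∀ p, 1 ≤ p → p < n → dollar < T p)
    -- `SA` is a permutation of `{1,...,n}` sorting the suffixes lexicographically
    (hSAran : ∀ i, 1 ≤ i → i ≤ n → 1 ≤ SA i ∧ SA i ≤ n)
    (hSAsurj : ∀ p, 1 ≤ p → p ≤ n → ∃ i, 1 ≤ i ∧ i ≤ n ∧ SA i = p)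
    (hSAmono : ∀ i j, 1 ≤ i → i < j → j ≤ n → sfx T n (SA i) < sfx T n (SA j))
    (X : List α) (i j : ℕ) (hij : i ≤ j)
    -- `{i,...,j}` is the SA-interval of `X` (nonempty since `i ≤ j`)
    (hint : ∀ i', (1 ≤ i' ∧ i' ≤ n ∧ X <+: sfx T n (SA i')) ↔ (i ≤ i' ∧ i' ≤ j))
    (c : α) (hc : c ≠ dollar)
    (hnoc : ∀ i', i ≤ i' → i' ≤ j → bwt T SA dollar i' ≠ c)
    (hocc : ∃ q, 1 ≤ q ∧ q ≤ n ∧ bwt T SA dollar q = c) :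
    ∃ q, 1 ≤ q ∧ q ≤ n ∧ bwt T SA dollar q = c ∧
      -- `q` is the last occurrence of `c` before `i`, or the first one after `j`
      ((q < i ∧ ∀ q', q' < i → bwt T SA dollar q' = c → q' ≤ q) ∨
       (j < q ∧ ∀ q', j < q' → q' ≤ n → bwt T SA dollar q' = c → q ≤ q')) ∧
      -- and the suffix `T[SA[q]-1..n]` maximizes the LCP with `cX`
      ∀ p, 1 ≤ p → p ≤ n →
        lcp (c :: X) (sfx T n p) ≤ lcp (c :: X) (sfx T n (SA q - 1)) := by
  classical
  obtain ⟨hi1, hin, hXi⟩ := (hint i).mpr ⟨le_rfl, hij⟩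
  obtain ⟨hj1, hjn, hXj⟩ := (hint j).mpr ⟨hij, le_rfl⟩
  -- basic facts about occurrences of `c` in the BWT
  have hQ : ∀ q, 1 ≤ q → q ≤ n → bwt T SA dollar q = c →
      2 ≤ SA q ∧ SA q ≤ n ∧ T (SA q - 1) = c := by
    intro q h1 h2 hb
    obtain ⟨hs1, hs2⟩ := hSAran q h1 h2
    by_cases h : SA q = 1
    · exact absurd (by simpa [bwt, h] using hb) (Ne.symm hc)
    · exact ⟨by omega, hs2, by simpa [bwt, h] using hb⟩
  -- the LCP value at an occurrence
  have hvalc : ∀ q, 1 ≤ q → q ≤ n → bwt T SA dollar q = c →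
      lcp (c :: X) (sfx T n (SA q - 1)) = lcp X (sfx T n (SA q)) + 1 := by
    intro q h1 h2 hb
    obtain ⟨h2SA, hSAn, hT⟩ := hQ q h1 h2 hb
    rw [sfx_cons T n (SA q - 1) (by omega), hT,
      show SA q - 1 + 1 = SA q from by omega]
    simp [lcp]
  have hmono : ∀ q1 q2, 1 ≤ q1 → q1 < q2 → q2 ≤ n →
      List.Lex (· < ·) (sfx T n (SA q1)) (sfx T n (SA q2)) := by
    intro q1 q2 a b c'
    exact hSAmono q1 q2 a b c'
  -- monotonicity of lcp with X on the left of the interval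
  have hboundp : ∀ qp q, 1 ≤ q → q ≤ qp → qp < i →
      lcp X (sfx T n (SA q)) ≤ lcp X (sfx T n (SA qp)) := by
    intro qp q h1 hle hlt
    rw [lcp_prefix X _ _ hXi, lcp_prefix X _ _ hXi]
    refine min_le_min ?_ le_rfl
    rw [lcp_comm _ (sfx T n (SA q)), lcp_comm _ (sfx T n (SA qp))]
    have h2 : List.Lex (· < ·) (sfx T n (SA qp)) (sfx T n (SA i)) :=
      hmono qp i (by omega) hlt hin
    rcases eq_or_lt_of_le hle with h | hlt'
    · subst h; exact le_rfl
    · exact (lcp_squeeze _ _ _ (hmono q qp h1 hlt' (by omega)) h2).2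
  -- monotonicity of lcp with X on the right of the interval
  have hboundf : ∀ qf q, j < qf → qf ≤ q → q ≤ n →
      lcp X (sfx T n (SA q)) ≤ lcp X (sfx T n (SA qf)) := by
    intro qf q hlt hle h2
    rw [lcp_prefix X _ _ hXj, lcp_prefix X _ _ hXj]
    refine min_le_min ?_ le_rfl
    have h1 : List.Lex (· < ·) (sfx T n (SA j)) (sfx T n (SA qf)) :=
      hmono j qf hj1 hlt (by omega)
    rcases eq_or_lt_of_le hle with h | hlt'
    · subst h; exact le_rfl
    · exact (lcp_squeeze _ _ _ h1 (hmono qf q (by omega) hlt' h2)).1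
  -- every position with positive LCP against `cX` comes from an occurrence
  have hrep : ∀ p, 1 ≤ p → p ≤ n → lcp (c :: X) (sfx T n p) = 0 ∨
      ∃ q, 1 ≤ q ∧ q ≤ n ∧ bwt T SA dollar q = c ∧ SA q - 1 = p := by
    intro p h1 h2
    by_cases hz : lcp (c :: X) (sfx T n p) = 0
    · exact Or.inl hz
    right
    rw [sfx_cons T n p h2] at hz
    have hTp : T p = c := by
      by_contra hne
      exact hz (by simp [lcp, Ne.symm hne])
    have hpn : p ≠ n := fun h => hc (by rw [← hTp, h, hTn])
    obtain ⟨q, hq1, hq2, hq3⟩ := hSAsurj (p + 1) (by omega) (by omega)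
    refine ⟨q, hq1, hq2, ?_, by omega⟩
    unfold bwt
    rw [hq3]
    simp only [show p + 1 ≠ 1 from by omega, if_neg, ite_false]
    simpa using hTp
  -- the two candidate (finite) sets of occurrences
  set Qp := (Finset.Icc 1 n).filter (fun q => q < i ∧ bwt T SA dollar q = c) with hQpdef
  set Qf := (Finset.Icc 1 n).filter (fun q => j < q ∧ bwt T SA dollar q = c) with hQfdef
  have hmemp : ∀ q, q ∈ Qp ↔ (1 ≤ q ∧ q ≤ n ∧ q < i ∧ bwt T SA dollar q = c) := by
    intro q; simp [hQpdef, Finset.mem_filter, Finset.mem_Icc]; tauto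
  have hmemf : ∀ q, q ∈ Qf ↔ (1 ≤ q ∧ q ≤ n ∧ j < q ∧ bwt T SA dollar q = c) := by
    intro q; simp [hQfdef, Finset.mem_filter, Finset.mem_Icc]; tauto
  have hsplit : ∀ q, 1 ≤ q → q ≤ n → bwt T SA dollar q = c → q ∈ Qp ∨ q ∈ Qf := by
    intro q h1 h2 hb
    by_cases hqi : q < i
    · exact Or.inl ((hmemp q).mpr ⟨h1, h2, hqi, hb⟩)
    · refine Or.inr ((hmemf q).mpr ⟨h1, h2, ?_, hb⟩)
      by_contra hqj
      exact hnoc q (by omega) (by omega) hb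
  -- given a candidate dominating both sets, conclude the maximality over all suffixes
  have hfinish : ∀ qs, (1 ≤ qs ∧ qs ≤ n ∧ bwt T SA dollar qs = c) →
      (∀ q ∈ Qp, lcp X (sfx T n (SA q)) ≤ lcp X (sfx T n (SA qs))) →
      (∀ q ∈ Qf, lcp X (sfx T n (SA q)) ≤ lcp X (sfx T n (SA qs))) →
      ∀ p, 1 ≤ p → p ≤ n →
        lcp (c :: X) (sfx T n p) ≤ lcp (c :: X) (sfx T n (SA qs - 1)) := by
    intro qs hqs hbp hbf p h1 h2
    rcases hrep p h1 h2 with hz | ⟨q, hq1, hq2, hq3, hq4⟩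
    · rw [hz]; exact Nat.zero_le _
    · rw [← hq4, hvalc q hq1 hq2 hq3, hvalc qs hqs.1 hqs.2.1 hqs.2.2]
      rcases hsplit q hq1 hq2 hq3 with h | h
      · exact Nat.succ_le_succ (hbp q h)
      · exact Nat.succ_le_succ (hbf q h)
  by_cases hp : Qp.Nonempty
  · obtain ⟨hp1, hp2, hp3, hp4⟩ := (hmemp (Qp.max' hp)).mp (Qp.max'_mem hp)
    have hbp : ∀ q ∈ Qp, lcp X (sfx T n (SA q)) ≤ lcp X (sfx T n (SA (Qp.max' hp))) := by
      intro q hq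
      obtain ⟨a, b, c', d⟩ := (hmemp q).mp hq
      exact hboundp (Qp.max' hp) q a (Qp.le_max' q hq) hp3
    have hmaxp : ∀ q', q' < i → bwt T SA dollar q' = c → q' ≤ Qp.max' hp := by
      intro q' hq' hb'
      rcases Nat.eq_zero_or_pos q' with rfl | h1'
      · exact Nat.zero_le _
      · exact Qp.le_max' q' ((hmemp q').mpr ⟨h1', by omega, hq', hb'⟩)
    by_cases hf : Qf.Nonempty
    · obtain ⟨hf1, hf2, hf3, hf4⟩ := (hmemf (Qf.min' hf)).mp (Qf.min'_mem hf)
      have hbf : ∀ q ∈ Qf, lcp X (sfx T n (SA q)) ≤ lcp X (sfx T n (SA (Qf.min' hf))) := by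
        intro q hq
        obtain ⟨a, b, c', d⟩ := (hmemf q).mp hq
        exact hboundf (Qf.min' hf) q hf3 (Qf.min'_le q hq) b
      by_cases hcmp : lcp X (sfx T n (SA (Qf.min' hf))) ≤ lcp X (sfx T n (SA (Qp.max' hp)))
      · exact ⟨Qp.max' hp, hp1, hp2, hp4, Or.inl ⟨hp3, hmaxp⟩,
          hfinish _ ⟨hp1, hp2, hp4⟩ hbp (fun q hq => le_trans (hbf q hq) hcmp)⟩
      · push_neg at hcmp
        refine ⟨Qf.min' hf, hf1, hf2, hf4, Or.inr ⟨hf3, ?_⟩,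
          hfinish _ ⟨hf1, hf2, hf4⟩ (fun q hq => le_trans (hbp q hq) (le_of_lt hcmp)) hbf⟩
        intro q' hj' hn' hb'
        exact Qf.min'_le q' ((hmemf q').mpr ⟨by omega, hn', hj', hb'⟩)
    · have hbf : ∀ q ∈ Qf, lcp X (sfx T n (SA q)) ≤ lcp X (sfx T n (SA (Qp.max' hp))) :=
        fun q hq => absurd ⟨q, hq⟩ hf
      exact ⟨Qp.max' hp, hp1, hp2, hp4, Or.inl ⟨hp3, hmaxp⟩,
        hfinish _ ⟨hp1, hp2, hp4⟩ hbp hbf⟩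
  · by_cases hf : Qf.Nonempty
    · obtain ⟨hf1, hf2, hf3, hf4⟩ := (hmemf (Qf.min' hf)).mp (Qf.min'_mem hf)
      have hbf : ∀ q ∈ Qf, lcp X (sfx T n (SA q)) ≤ lcp X (sfx T n (SA (Qf.min' hf))) := by
        intro q hq
        obtain ⟨a, b, c', d⟩ := (hmemf q).mp hq
        exact hboundf (Qf.min' hf) q hf3 (Qf.min'_le q hq) b
      have hbp : ∀ q ∈ Qp, lcp X (sfx T n (SA q)) ≤ lcp X (sfx T n (SA (Qf.min' hf))) :=
        fun q hq => absurd ⟨q, hq⟩ hp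
      refine ⟨Qf.min' hf, hf1, hf2, hf4, Or.inr ⟨hf3, ?_⟩,
        hfinish _ ⟨hf1, hf2, hf4⟩ hbp hbf⟩
      intro q' hj' hn' hb'
      exact Qf.min'_le q' ((hmemf q').mpr ⟨by omega, hn', hj', hb'⟩)
    · obtain ⟨q0, h1, h2, h3⟩ := hocc
      rcases hsplit q0 h1 h2 h3 with h | h
      · exact absurd ⟨q0, h⟩ hp
      · exact absurd ⟨q0, h⟩ hf
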